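/- The strengthened physical update is an approximate physical update: let ⪯ be an estimator on the flow monoid and define up♯(com)(s) = up(com)(s) if up(com)(s) ≠ ⊤ and s ⪯ctx t for every t ∈ up(com)(s), and up♯(com)(s) = ⊤ otherwise (lifted to predicates by joins). Then (i) up(com)(s) ⊑ up♯(com)(s) for every predicate s, and (ii) if up♯(com)(s) ≠ ⊤ and s ⋆ u is defined, then up♯(com)(s ⋆ u) = up♯(com)(s) ⌢ u. -/

import Mathlib

universe u

/-- A flow monoid: a commutative monoid whose natural order
(`m ≤ n ↔ ∃ o, n = m + o`) is a partial order that forms an ω-cpo, with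
continuous addition. `csup` assigns to every ascending chain its join. -/
class FlowMonoid (M : Type u) extends AddCommMonoid M, PartialOrder M, OrderBot M,
    IsOrderedAddMonoid M, CanonicallyOrderedAdd M where
  /-- The join of an ascending chain. -/
  csup : (ℕ → M) → M
  isLUB_csup : ∀ K : ℕ → M, Monotone K → IsLUB (Set.range K) (csup K)
  add_csup : ∀ (n : M) (K : ℕ → M), Monotone K → n + csup K = csup fun i => n + K i

variable {M : Type u} [FlowMonoid M]

/-- Continuity: `f` commutes with joins of ascending chains. -/
def FMCont (f : M → M) : Prop :=
  ∀ K : ℕ → M, Monotone K →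
    IsLUB (Set.range fun i => f (K i)) (f (FlowMonoid.csup K))

/-- A flow graph: a finite set of nodes `X ⊆ ℕ`, continuous edge functions, and
a finitely supported inflow from sources outside `X` into `X`. (The edge
functions of sources outside `X` and the inflow outside its domain are
canonically zero.) -/
structure FlowGraph (M : Type u) [FlowMonoid M] where
  /-- The nodes. -/
  X : Finset ℕ
  /-- The edge functions: `E x y` labels the edge from `x` to `y`. -/
  E : ℕ → ℕ → M → M
  /-- The inflow: `inflow y x` is the flow the graph receives at `x ∈ X` from the
  external node `y ∉ X`. -/
  inflow : ℕ → ℕ → M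
  econt : ∀ x y, x ∈ X → FMCont (E x y)
  edom : ∀ x y, x ∉ X → E x y = fun _ => 0
  inflow_fin : ∀ x, (Function.support fun y => inflow y x).Finite
  inflow_dom : ∀ y x, inflow y x ≠ 0 → y ∉ X ∧ x ∈ X

namespace FlowGraph

/-- One step of the flow fixed-point computation, with inflow `i`. -/
noncomputable def stepWith (h : FlowGraph M) (i : ℕ → ℕ → M) (c : ℕ → M) : ℕ → M :=
  fun x => if x ∈ h.X then (∑ᶠ y, i y x) + ∑ y ∈ h.X, h.E y x (c y) else 0

/-- The flow for a custom inflow `i`, obtained by Kleene iteration: the least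
function satisfying the flow equation. -/
noncomputable def flowWith (h : FlowGraph M) (i : ℕ → ℕ → M) : ℕ → M :=
  fun x => FlowMonoid.csup fun n => (h.stepWith i)^[n] (fun _ => 0) x

/-- The flow of a flow graph. -/
noncomputable def flow (h : FlowGraph M) : ℕ → M := h.flowWith h.inflow

/-- The outflow of a flow graph: `out x y = E x y (flow x)`. -/
noncomputable def out (h : FlowGraph M) (x y : ℕ) : M := h.E x y (h.flow x)

/-- The transfer function: maps an inflow `i` to the resulting outflow at `y`. -/
noncomputable def tf (h : FlowGraph M) (i : ℕ → ℕ → M) (y : ℕ) : M :=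
  ∑ x ∈ h.X, h.E x y (h.flowWith i x)

/-- The ghost multiplication of flow graphs: disjoint union of the node sets and
edges; the inflow of each component is restricted to sources outside the other. -/
def gmul (s t : FlowGraph M) : FlowGraph M where
  X := s.X ∪ t.X
  E := fun x y => if x ∈ s.X then s.E x y else t.E x y
  inflow := fun y x => if y ∈ s.X ∪ t.X then 0 else s.inflow y x + t.inflow y x
  econt := by
    intro x y hx
    try dsimp only
    by_cases hs : x ∈ s.X
    · rw [if_pos hs]; exact s.econt x y hs
    · rw [if_neg hs]
      rcases Finset.mem_union.mp hx with h | h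
      · exact absurd h hs
      · exact t.econt x y h
  edom := by
    intro x y hx
    try dsimp only
    rw [if_neg fun h => hx (Finset.mem_union_left _ h)]
    exact t.edom x y fun h => hx (Finset.mem_union_right _ h)
  inflow_fin := by
    intro x
    refine Set.Finite.subset ((s.inflow_fin x).union (t.inflow_fin x)) ?_
    intro y hy
    rw [Function.mem_support] at hy
    try dsimp only at hy
    by_cases hmem : y ∈ s.X ∪ t.X
    · rw [if_pos hmem] at hy; exact absurd rfl hy
    · rw [if_neg hmem] at hy
      by_cases h1 : s.inflow y x = 0
      · have h2 : t.inflow y x ≠ 0 := fun h2 => hy (by rw [h1, h2, add_zero])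
        exact Set.mem_union_right _ (Function.mem_support.mpr h2)
      · exact Set.mem_union_left _ (Function.mem_support.mpr h1)
  inflow_dom := by
    intro y x hy
    try dsimp only at hy
    by_cases hmem : y ∈ s.X ∪ t.X
    · rw [if_pos hmem] at hy; exact absurd rfl hy
    · rw [if_neg hmem] at hy
      refine ⟨hmem, ?_⟩
      by_cases h1 : s.inflow y x = 0
      · have h2 : t.inflow y x ≠ 0 := fun h2 => hy (by rw [h1, h2, add_zero])
        exact Finset.mem_union_right _ (t.inflow_dom y x h2).2
      · exact Finset.mem_union_left _ (s.inflow_dom y x h1).2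

/-- Definedness of the multiplication `s ⋆ t` of flow graphs: the ghost
multiplication is defined, the inflow expectation of each graph at the mutual
boundary matches the outflow of the other, and the flows are preserved in the
composition (whose result is then `gmul s t`). -/
def MDef (s t : FlowGraph M) : Prop :=
  Disjoint s.X t.X ∧
  (∀ x ∈ s.X, ∀ y ∈ t.X, s.out x y = t.inflow x y ∧ t.out y x = s.inflow y x) ∧
  (∀ x ∈ s.X, (gmul s t).flow x = s.flow x) ∧
  (∀ y ∈ t.X, (gmul s t).flow y = t.flow y)

end FlowGraph

/-- An estimator on the flow monoid: a precongruence that is stable under joins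
of ascending chains and over which the edge functions (i.e. the continuous
functions) are monotonic. -/
def IsEstimator (r : M → M → Prop) : Prop :=
  -- (E1) reflexive and transitive
  (∀ m : M, r m m) ∧
  (∀ m n o : M, r m n → r n o → r m o) ∧
  -- (E2) compatible with addition
  (∀ m n o : M, r m n → r (m + o) (n + o)) ∧
  -- (E3) stable under joins of ascending chains
  (∀ K L : ℕ → M, Monotone K → Monotone L → (∀ i, r (K i) (L i)) →
    r (FlowMonoid.csup K) (FlowMonoid.csup L)) ∧
  -- (E4) edge functions are monotonic
  (∀ f : M → M, FMCont f → ∀ m n : M, r m n → r (f m) (f n))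

/-- The estimator induced on flow graphs: same nodes, same inflow, and the
transfer functions are related for every smaller inflow. -/
def ctxLe (r : M → M → Prop) (s₁ s₂ : FlowGraph M) : Prop :=
  s₁.X = s₂.X ∧ s₁.inflow = s₂.inflow ∧
  ∀ i : ℕ → ℕ → M, (∀ y x, i y x ≤ s₁.inflow y x) →
    ∀ y, y ∉ s₁.X → r (s₁.tf i y) (s₂.tf i y)

/-- `inflowLe r Y X i₁ i₂` is the relation `i₁ ⪯^Y i₂` on inflows over node set
`X`: the inflows agree on all sources outside `Y`, and for each target the sums
of the contributions from `Y` are related by `r`. -/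
def inflowLe (r : M → M → Prop) (Y X : Finset ℕ) (i₁ i₂ : ℕ → ℕ → M) : Prop :=
  (∀ y, y ∉ Y → ∀ x, i₁ y x = i₂ y x) ∧
  (∀ x ∈ X, r (∑ y ∈ Y, i₁ y x) (∑ y ∈ Y, i₂ y x))

section Chunk1
open FlowMonoid Function

lemma le_csup' {K : ℕ → M} (hK : Monotone K) (n : ℕ) : K n ≤ FlowMonoid.csup K :=
  (FlowMonoid.isLUB_csup K hK).1 ⟨n, rfl⟩

lemma csup_le' {K : ℕ → M} (hK : Monotone K) {b : M} (h : ∀ n, K n ≤ b) :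
    FlowMonoid.csup K ≤ b :=
  (FlowMonoid.isLUB_csup K hK).2 (by rintro _ ⟨n, rfl⟩; exact h n)

lemma csup_eq {K : ℕ → M} (hK : Monotone K) {b : M} (h : IsLUB (Set.range K) b) :
    FlowMonoid.csup K = b :=
  (FlowMonoid.isLUB_csup K hK).unique h

lemma csup_const' (m : M) : FlowMonoid.csup (fun _ : ℕ => m) = m :=
  csup_eq monotone_const (by rw [Set.range_const]; exact isLUB_singleton)

lemma csup_succ {K : ℕ → M} (hK : Monotone K) :
    FlowMonoid.csup (fun n => K (n + 1)) = FlowMonoid.csup K := by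
  apply csup_eq (fun a b hab => hK (by omega))
  constructor
  · rintro _ ⟨n, rfl⟩; exact le_csup' hK (n + 1)
  · intro b hb
    apply csup_le' hK
    intro n
    exact le_trans (hK (Nat.le_succ n)) (hb ⟨n, rfl⟩)

lemma fmcont_mono {f : M → M} (hf : FMCont f) : Monotone f := by
  intro m n hmn
  set K : ℕ → M := fun j => if j = 0 then m else n with hKdef
  have hK : Monotone K := by
    intro a b hab
    by_cases ha : a = 0
    · subst ha
      by_cases hb : b = 0
      · subst hb; exact le_rfl
      · simp only [K, if_pos rfl, if_neg hb]; exact hmn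
    · have hb : b ≠ 0 := by omega
      simp only [K, if_neg ha, if_neg hb]; exact le_rfl
  have hcs : FlowMonoid.csup K = n := by
    apply csup_eq hK
    constructor
    · rintro _ ⟨j, rfl⟩
      by_cases hj : j = 0
      · simp only [K, if_pos hj]; exact hmn
      · simp only [K, if_neg hj]; exact le_rfl
    · intro b hb
      exact hb ⟨1, by simp [K]⟩
  have h2 := hf K hK
  rw [hcs] at h2
  exact h2.1 ⟨0, by simp [K]⟩

lemma cont_csup {f : M → M} (hf : FMCont f) {K : ℕ → M} (hK : Monotone K) :
    f (FlowMonoid.csup K) = FlowMonoid.csup (fun n => f (K n)) :=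
  (csup_eq (fun a b hab => fmcont_mono hf (hK hab)) (hf K hK)).symm

lemma csup_add' {K L : ℕ → M} (hK : Monotone K) (hL : Monotone L) :
    FlowMonoid.csup K + FlowMonoid.csup L = FlowMonoid.csup (fun n => K n + L n) := by
  symm
  apply csup_eq (fun a b hab => add_le_add (hK hab) (hL hab))
  constructor
  · rintro _ ⟨n, rfl⟩; exact add_le_add (le_csup' hK n) (le_csup' hL n)
  · intro b hb
    have h1 : ∀ p q, K p + L q ≤ b := by
      intro p q
      calc K p + L q ≤ K (max p q) + L (max p q) :=
            add_le_add (hK (le_max_left p q)) (hL (le_max_right p q))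
        _ ≤ b := hb ⟨max p q, rfl⟩
    have h2 : ∀ p, K p + FlowMonoid.csup L ≤ b := by
      intro p
      rw [FlowMonoid.add_csup (K p) L hL]
      exact csup_le' (fun a b' hab => add_le_add_right (hL hab) _) (h1 p)
    calc FlowMonoid.csup K + FlowMonoid.csup L
        = FlowMonoid.csup L + FlowMonoid.csup K := add_comm _ _
      _ = FlowMonoid.csup (fun p => FlowMonoid.csup L + K p) := FlowMonoid.add_csup _ K hK
      _ ≤ b := csup_le' (fun a b' hab => add_le_add_right (hK hab) _)
          (fun p => by rw [add_comm]; exact h2 p)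

lemma csup_sum {T : Finset ℕ} {K : ℕ → ℕ → M} (h : ∀ x ∈ T, Monotone (K x)) :
    ∑ x ∈ T, FlowMonoid.csup (K x) = FlowMonoid.csup (fun n => ∑ x ∈ T, K x n) := by
  induction T using Finset.induction with
  | empty => simp only [Finset.sum_empty]; exact (csup_const' (0 : M)).symm
  | @insert a T ha ih =>
      rw [Finset.sum_insert ha,
        ih (fun x hx => h x (Finset.mem_insert_of_mem hx)),
        csup_add' (h a (Finset.mem_insert_self a T))
          (fun p q hpq => Finset.sum_le_sum fun x hx =>
            h x (Finset.mem_insert_of_mem hx) hpq)]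
      apply csup_eq
      · intro p q hpq
        exact add_le_add (h a (Finset.mem_insert_self a T) hpq)
          (Finset.sum_le_sum fun x hx => h x (Finset.mem_insert_of_mem hx) hpq)
      · constructor
        · rintro _ ⟨n, rfl⟩
          show K a n + ∑ x ∈ T, K x n ≤ _
          have := le_csup' (fun p q hpq => Finset.sum_le_sum fun x hx => h x hx hpq :
            Monotone fun n => ∑ x ∈ insert a T, K x n) n
          rwa [Finset.sum_insert ha] at this
        · intro b hb
          apply csup_le' (fun p q hpq => Finset.sum_le_sum fun x hx => h x hx hpq)
          intro n
          rw [Finset.sum_insert ha]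
          exact hb ⟨n, rfl⟩

end Chunk1

section Chunk2
open FlowMonoid FlowGraph Function

noncomputable def fchain (h : FlowGraph M) (i : ℕ → ℕ → M) (n : ℕ) : ℕ → M :=
  (h.stepWith i)^[n] (fun _ => 0)

lemma flowWith_eq_csup (h : FlowGraph M) (i : ℕ → ℕ → M) (x : ℕ) :
    h.flowWith i x = FlowMonoid.csup (fun n => fchain h i n x) := rfl

lemma stepWith_mono (h : FlowGraph M) (i : ℕ → ℕ → M) {c c' : ℕ → M}
    (hc : ∀ x, c x ≤ c' x) (x : ℕ) : h.stepWith i c x ≤ h.stepWith i c' x := by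
  unfold FlowGraph.stepWith
  split
  · next hx =>
      exact add_le_add_right
        (Finset.sum_le_sum fun y hy => fmcont_mono (h.econt y x hy) (hc y)) _
  · exact le_rfl

lemma fchain_succ (h : FlowGraph M) (i : ℕ → ℕ → M) (n : ℕ) :
    fchain h i (n + 1) = h.stepWith i (fchain h i n) := by
  simp only [fchain, Function.iterate_succ_apply']

lemma fchain_mono (h : FlowGraph M) (i : ℕ → ℕ → M) (x : ℕ) :
    Monotone fun n => fchain h i n x := by
  have key : ∀ n x, fchain h i n x ≤ fchain h i (n + 1) x := by
    intro n
    induction n with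
    | zero => intro x; exact zero_le
    | succ n ih =>
        intro x
        rw [fchain_succ, fchain_succ]
        exact stepWith_mono h i ih x
  exact monotone_nat_of_le_succ fun n => key n x

lemma flow_rel {ρ : M → M → Prop} (hρ0 : ρ 0 0)
    (hsup : ∀ K L : ℕ → M, Monotone K → Monotone L → (∀ n, ρ (K n) (L n)) →
      ρ (FlowMonoid.csup K) (FlowMonoid.csup L))
    (h h' : FlowGraph M) (i i' : ℕ → ℕ → M)
    (hstep : ∀ c c' : ℕ → M, (∀ x, ρ (c x) (c' x)) →
      ∀ x, ρ (h.stepWith i c x) (h'.stepWith i' c' x))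
    (x : ℕ) : ρ (h.flowWith i x) (h'.flowWith i' x) := by
  have key : ∀ n x, ρ (fchain h i n x) (fchain h' i' n x) := by
    intro n
    induction n with
    | zero => intro x; exact hρ0
    | succ n ih =>
        intro x
        rw [fchain_succ, fchain_succ]
        exact hstep _ _ ih x
  exact hsup _ _ (fchain_mono h i x) (fchain_mono h' i' x) (fun n => key n x)

lemma flow_le_flow (h h' : FlowGraph M) (i i' : ℕ → ℕ → M)
    (hstep : ∀ c c' : ℕ → M, (∀ x, c x ≤ c' x) →
      ∀ x, h.stepWith i c x ≤ h'.stepWith i' c' x)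
    (x : ℕ) : h.flowWith i x ≤ h'.flowWith i' x :=
  flow_rel (le_refl (0 : M))
    (fun K L hK hL hKL => csup_le' hK fun n => (hKL n).trans (le_csup' hL n))
    h h' i i' hstep x

lemma finsum_le_finsum'' {f g : ℕ → M} (hg : (Function.support g).Finite)
    (hle : ∀ y, f y ≤ g y) : ∑ᶠ y, f y ≤ ∑ᶠ y, g y := by
  have hf : Function.support f ⊆ Function.support g := by
    intro y hy
    simp only [Function.mem_support] at *
    intro h0
    exact hy (le_antisymm (h0 ▸ hle y) (zero_le))
  rw [finsum_eq_sum_of_support_subset f (s := hg.toFinset)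
      (by intro y hy; exact hg.mem_toFinset.2 (hf hy)),
    finsum_eq_sum_of_support_subset g (s := hg.toFinset)
      (by intro y hy; exact hg.mem_toFinset.2 hy)]
  exact Finset.sum_le_sum fun y _ => hle y

lemma flowWith_mono_inflow (h : FlowGraph M) {i i' : ℕ → ℕ → M}
    (hfin : ∀ x, (Function.support fun y => i' y x).Finite)
    (hle : ∀ y x, i y x ≤ i' y x) (x : ℕ) : h.flowWith i x ≤ h.flowWith i' x := by
  apply flow_le_flow
  intro c c' hc x
  unfold FlowGraph.stepWith
  split
  · exact add_le_add (finsum_le_finsum'' (hfin x) (fun y => hle y x))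
      (Finset.sum_le_sum fun y hy => fmcont_mono (h.econt y x hy) (hc y))
  · exact le_rfl

lemma flowWith_outside (h : FlowGraph M) (i : ℕ → ℕ → M) {x : ℕ} (hx : x ∉ h.X) :
    h.flowWith i x = 0 := by
  have h1 : ∀ n, fchain h i n x = 0 := by
    intro n
    cases n with
    | zero => rfl
    | succ n =>
        rw [fchain_succ]
        unfold FlowGraph.stepWith
        rw [if_neg hx]
  rw [flowWith_eq_csup, show (fun n => fchain h i n x) = fun _ => (0 : M) from funext h1]
  exact csup_const' 0

lemma stepWith_flowWith (h : FlowGraph M) (i : ℕ → ℕ → M) (x : ℕ) :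
    h.stepWith i (h.flowWith i) x = h.flowWith i x := by
  by_cases hx : x ∈ h.X
  · show (if x ∈ h.X then (∑ᶠ y, i y x) + ∑ y ∈ h.X, h.E y x (h.flowWith i y) else 0) = _
    rw [if_pos hx]
    have h1 : ∀ y ∈ h.X, h.E y x (h.flowWith i y) =
        FlowMonoid.csup (fun n => h.E y x (fchain h i n y)) := fun y hy =>
      cont_csup (h.econt y x hy) (fchain_mono h i y)
    rw [Finset.sum_congr rfl h1,
      csup_sum (K := fun y n => h.E y x (fchain h i n y)) (fun y hy p q hpq =>
        fmcont_mono (h.econt y x hy) (fchain_mono h i y hpq)),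
      FlowMonoid.add_csup _ _ (fun p q hpq => Finset.sum_le_sum fun y hy =>
        fmcont_mono (h.econt y x hy) (fchain_mono h i y hpq))]
    have h2 : (fun n => (∑ᶠ y, i y x) + ∑ y ∈ h.X, h.E y x (fchain h i n y)) =
        fun n => fchain h i (n + 1) x := by
      funext n
      rw [fchain_succ]
      show _ = if x ∈ h.X then (∑ᶠ y, i y x) + ∑ y ∈ h.X, h.E y x (fchain h i n y) else 0
      rw [if_pos hx]
    rw [h2, csup_succ (fchain_mono h i x), flowWith_eq_csup]
  · rw [flowWith_outside h i hx]
    show (if x ∈ h.X then _ else (0:M)) = (0:M)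
    rw [if_neg hx]

lemma flowWith_le_prefix (h : FlowGraph M) (i : ℕ → ℕ → M) {c : ℕ → M}
    (hc : ∀ x, h.stepWith i c x ≤ c x) (x : ℕ) : h.flowWith i x ≤ c x := by
  have key : ∀ n x, fchain h i n x ≤ c x := by
    intro n
    induction n with
    | zero => intro x; exact zero_le
    | succ n ih =>
        intro x
        rw [fchain_succ]
        exact (stepWith_mono h i ih x).trans (hc x)
  exact csup_le' (fchain_mono h i x) (fun n => key n x)

lemma flowWith_congr (h h' : FlowGraph M) (hX : h.X = h'.X)
    (hE : ∀ y, y ∈ h.X → ∀ x m, h.E y x m = h'.E y x m) (i : ℕ → ℕ → M) :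
    h.flowWith i = h'.flowWith i := by
  have hstep : h.stepWith i = h'.stepWith i := by
    funext c x
    show (if x ∈ h.X then (∑ᶠ y, i y x) + ∑ y ∈ h.X, h.E y x (c y) else 0) =
      (if x ∈ h'.X then (∑ᶠ y, i y x) + ∑ y ∈ h'.X, h'.E y x (c y) else 0)
    rw [← hX]
    by_cases hx : x ∈ h.X
    · rw [if_pos hx, if_pos hx]
      congr 1
      exact Finset.sum_congr rfl fun y hy => hE y hy x (c y)
    · rw [if_neg hx, if_neg hx]
  unfold FlowGraph.flowWith
  rw [hstep]

lemma IsEstimator.add_rel {r : M → M → Prop} (hr : IsEstimator r) {a a' b b' : M}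
    (h1 : r a a') (h2 : r b b') : r (a + b) (a' + b') := by
  have h3 := hr.2.2.1 a a' b h1
  have h4 := hr.2.2.1 b b' a' h2
  rw [add_comm b a', add_comm b' a'] at h4
  exact hr.2.1 _ _ _ h3 h4

lemma IsEstimator.sum_rel {r : M → M → Prop} (hr : IsEstimator r) {T : Finset ℕ}
    {f g : ℕ → M} (h : ∀ x ∈ T, r (f x) (g x)) :
    r (∑ x ∈ T, f x) (∑ x ∈ T, g x) := by
  induction T using Finset.induction with
  | empty => simpa using hr.1 0
  | @insert a T ha ih =>
      rw [Finset.sum_insert ha, Finset.sum_insert ha]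
      exact hr.add_rel (h a (Finset.mem_insert_self a T))
        (ih fun x hx => h x (Finset.mem_insert_of_mem hx))

end Chunk2

section Chunk3
open FlowMonoid FlowGraph Function

/-- The inflow induced on one component (with targets `T`) by flows `c` on the
other component `h`, on top of the external inflow `i`. -/
noncomputable def indFlow (h : FlowGraph M) (i : ℕ → ℕ → M) (T : Finset ℕ)
    (c : ℕ → M) : ℕ → ℕ → M :=
  fun y x => if x ∈ T then (if y ∈ h.X then h.E y x (c y) else 0) + i y x else 0

lemma indFlow_fin (h : FlowGraph M) (i : ℕ → ℕ → M) (T : Finset ℕ) (c : ℕ → M)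
    (x : ℕ) (hifin : (Function.support fun y => i y x).Finite) :
    (Function.support fun y => indFlow h i T c y x).Finite := by
  apply Set.Finite.subset ((h.X.finite_toSet).union hifin)
  intro y hy
  simp only [Function.mem_support, indFlow] at hy
  by_cases hx : x ∈ T
  · rw [if_pos hx] at hy
    by_cases hyX : y ∈ h.X
    · exact Or.inl hyX
    · right
      rw [if_neg hyX, zero_add] at hy
      exact hy
  · rw [if_neg hx] at hy; exact absurd rfl hy

lemma finsum_indFlow (h : FlowGraph M) (i : ℕ → ℕ → M) (T : Finset ℕ) (c : ℕ → M)
    (x : ℕ) (hifin : (Function.support fun y => i y x).Finite) :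
    ∑ᶠ y, indFlow h i T c y x =
      if x ∈ T then (∑ y ∈ h.X, h.E y x (c y)) + ∑ᶠ y, i y x else 0 := by
  by_cases hx : x ∈ T
  · rw [if_pos hx]
    have heq : (fun y => indFlow h i T c y x) =
        fun y => (if y ∈ h.X then h.E y x (c y) else 0) + i y x := by
      funext y; simp only [indFlow, if_pos hx]
    rw [heq, finsum_add_distrib ?hf hifin]
    case hf =>
      apply Set.Finite.subset h.X.finite_toSet
      intro y hy
      simp only [Function.mem_support] at hy
      by_contra hyX
      exact hy (if_neg (fun h' => hyX (Finset.mem_coe.mpr h')))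
    congr 1
    rw [finsum_eq_sum_of_support_subset _ (s := h.X) ?hsub]
    · exact Finset.sum_congr rfl fun y hy => if_pos hy
    case hsub =>
      intro y hy
      simp only [Function.mem_support] at hy
      by_contra hyX
      exact hy (if_neg (fun h' => hyX (Finset.mem_coe.mpr h')))
  · have heq : (fun y => indFlow h i T c y x) = fun _ => (0 : M) := by
      funext y; simp only [indFlow, if_neg hx]
    rw [heq, if_neg hx]
    exact finsum_zero

lemma gmul_E_mem_left (s u : FlowGraph M) {y : ℕ} (hy : y ∈ s.X) :
    (gmul s u).E y = s.E y := by
  funext x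
  show (if y ∈ s.X then s.E y x else u.E y x) = s.E y x
  rw [if_pos hy]

lemma gmul_E_mem_right (s u : FlowGraph M) (hd : Disjoint s.X u.X) {y : ℕ}
    (hy : y ∈ u.X) : (gmul s u).E y = u.E y := by
  funext x
  show (if y ∈ s.X then s.E y x else u.E y x) = u.E y x
  rw [if_neg (Finset.disjoint_right.mp hd hy)]

lemma gmul_step (s u : FlowGraph M) (hd : Disjoint s.X u.X) (i : ℕ → ℕ → M)
    (c : ℕ → M) {x : ℕ} (hx : x ∈ s.X ∪ u.X) :
    (gmul s u).stepWith i c x =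
      (∑ᶠ y, i y x) + ((∑ y ∈ s.X, s.E y x (c y)) + ∑ y ∈ u.X, u.E y x (c y)) := by
  show (if x ∈ s.X ∪ u.X then
      (∑ᶠ y, i y x) + ∑ y ∈ s.X ∪ u.X, (gmul s u).E y x (c y) else 0) = _
  rw [if_pos hx]
  congr 1
  rw [Finset.sum_union hd]
  congr 1
  · exact Finset.sum_congr rfl fun y hy => by rw [gmul_E_mem_left s u hy]
  · exact Finset.sum_congr rfl fun y hy => by rw [gmul_E_mem_right s u hd hy]

lemma gmul_flow_comm (s u : FlowGraph M) (hd : Disjoint s.X u.X) (i : ℕ → ℕ → M) :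
    (gmul s u).flowWith i = (gmul u s).flowWith i := by
  apply flowWith_congr
  · show s.X ∪ u.X = u.X ∪ s.X
    exact Finset.union_comm s.X u.X
  · intro y hy x m
    rcases Finset.mem_union.mp hy with h1 | h1
    · rw [gmul_E_mem_left s u h1, gmul_E_mem_right u s hd.symm h1]
    · rw [gmul_E_mem_right s u hd h1, gmul_E_mem_left u s h1]

/-- Decomposition: the flow of `gmul s u` restricted to `u.X` is the flow of `u`
with the inflow induced by the composite flow on `s`. -/
lemma flow_gmul_right (s u : FlowGraph M) (hd : Disjoint s.X u.X) (i : ℕ → ℕ → M)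
    (hiz : ∀ y, (y ∈ s.X ∨ y ∈ u.X) → ∀ x, i y x = 0)
    (hifin : ∀ x, (Function.support fun y => i y x).Finite)
    {x : ℕ} (hx : x ∈ u.X) :
    (gmul s u).flowWith i x =
      u.flowWith (indFlow s i u.X ((gmul s u).flowWith i)) x := by
  set F := (gmul s u).flowWith i with hF
  set k := indFlow s i u.X F with hk
  -- the composite flow restricted to u.X is a fixpoint of the u-step
  have hfixU : ∀ z ∈ u.X, u.stepWith k F z = F z := by
    intro z hz
    have hzU : z ∈ s.X ∪ u.X := Finset.mem_union_right _ hz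
    show (if z ∈ u.X then (∑ᶠ y, k y z) + ∑ y ∈ u.X, u.E y z (F y) else 0) = F z
    rw [if_pos hz, hk, finsum_indFlow s i u.X F z (hifin z), if_pos hz]
    conv_rhs => rw [hF, ← stepWith_flowWith (gmul s u) i z, ← hF,
      gmul_step s u hd i F hzU]
    abel
  -- u's flow with induced inflow is below the composite flow
  have hle : ∀ z, u.flowWith k z ≤ F z := by
    apply flowWith_le_prefix
    intro z
    by_cases hz : z ∈ u.X
    · exact le_of_eq (hfixU z hz)
    · show (if z ∈ u.X then _ else (0 : M)) ≤ F z
      rw [if_neg hz]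
      exact zero_le
  -- conversely, the combination is a pre-fixpoint of the composite step
  set b : ℕ → M := fun z => if z ∈ u.X then u.flowWith k z else F z with hb
  have hbF : ∀ z, b z ≤ F z := by
    intro z
    by_cases hz : z ∈ u.X
    · rw [hb]; simpa [if_pos hz] using hle z
    · rw [hb]; simp [if_neg hz]
  have hpre : ∀ z, (gmul s u).stepWith i b z ≤ b z := by
    intro z
    by_cases hzU : z ∈ s.X ∪ u.X
    · rw [gmul_step s u hd i b hzU]
      by_cases hz : z ∈ u.X
      · -- equal to the u-fixpoint value
        have hone : ∀ y ∈ s.X, b y = F y := by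
          intro y hy
          rw [hb]
          simp [if_neg (Finset.disjoint_left.mp hd hy)]
        have htwo : ∀ y ∈ u.X, b y = u.flowWith k y := by
          intro y hy; rw [hb]; simp [if_pos hy]
        have hsum1 : ∑ y ∈ s.X, s.E y z (b y) = ∑ y ∈ s.X, s.E y z (F y) :=
          Finset.sum_congr rfl fun y hy => by rw [hone y hy]
        have hsum2 : ∑ y ∈ u.X, u.E y z (b y) =
            ∑ y ∈ u.X, u.E y z (u.flowWith k y) :=
          Finset.sum_congr rfl fun y hy => by rw [htwo y hy]
        have hfix2 : u.stepWith k (u.flowWith k) z = u.flowWith k z :=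
          stepWith_flowWith u k z
        rw [hsum1, hsum2]
        simp only [hb, if_pos hz]
        calc (∑ᶠ y, i y z) + ((∑ y ∈ s.X, s.E y z (F y)) +
              ∑ y ∈ u.X, u.E y z (u.flowWith k y))
            = (∑ᶠ y, k y z) + ∑ y ∈ u.X, u.E y z (u.flowWith k y) := by
              rw [hk, finsum_indFlow s i u.X F z (hifin z), if_pos hz]
              abel
          _ = u.stepWith k (u.flowWith k) z := by
              show _ = if z ∈ u.X then _ else 0
              rw [if_pos hz]
          _ = u.flowWith k z := hfix2
          _ ≤ u.flowWith k z := le_rfl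
      · -- bounded by the composite fixpoint value
        have hzS : z ∈ s.X := by
          rcases Finset.mem_union.mp hzU with h1 | h1
          · exact h1
          · exact absurd h1 hz
        have : (gmul s u).stepWith i F z = F z := stepWith_flowWith (gmul s u) i z
        rw [gmul_step s u hd i F hzU] at this
        simp only [hb, if_neg hz]
        have hbz : ∀ y, b y ≤ F y := hbF
        exact le_trans (by
          apply add_le_add_right
          apply add_le_add
          · exact Finset.sum_le_sum fun y hy => fmcont_mono (s.econt y z hy) (hbz y)
          · exact Finset.sum_le_sum fun y hy => fmcont_mono (u.econt y z hy) (hbz y))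
          (le_of_eq this)
    · have hzU' : z ∉ (gmul s u).X := hzU
      show (if z ∈ (gmul s u).X then _ else (0:M)) ≤ b z
      rw [if_neg hzU']
      exact zero_le
  have hFb : ∀ z, F z ≤ b z := fun z => flowWith_le_prefix (gmul s u) i hpre z
  have := hFb x
  rw [hb] at this
  simp only [if_pos hx] at this
  exact le_antisymm this (hle x)

/-- Decomposition on the left component. -/
lemma flow_gmul_left (s u : FlowGraph M) (hd : Disjoint s.X u.X) (i : ℕ → ℕ → M)
    (hiz : ∀ y, (y ∈ s.X ∨ y ∈ u.X) → ∀ x, i y x = 0)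
    (hifin : ∀ x, (Function.support fun y => i y x).Finite)
    {x : ℕ} (hx : x ∈ s.X) :
    (gmul s u).flowWith i x =
      s.flowWith (indFlow u i s.X ((gmul s u).flowWith i)) x := by
  rw [gmul_flow_comm s u hd i]
  exact flow_gmul_right u s hd.symm i (fun y hy => hiz y hy.symm) hifin hx

end Chunk3

section Chunk4
open FlowMonoid FlowGraph Function

/-- Alternating Kleene approximation of the composite flow: flows on the `u`
component. -/
noncomputable def dSeq (s u : FlowGraph M) (i : ℕ → ℕ → M) : ℕ → ℕ → M
  | 0 => fun _ => 0
  | n + 1 => u.flowWith (indFlow s i u.X (s.flowWith (indFlow u i s.X (dSeq s u i n))))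

/-- Alternating Kleene approximation of the composite flow: flows on the `s`
component. -/
noncomputable def eSeq (s u : FlowGraph M) (i : ℕ → ℕ → M) (n : ℕ) : ℕ → M :=
  s.flowWith (indFlow u i s.X (dSeq s u i n))

lemma dSeq_succ_eq (s u : FlowGraph M) (i : ℕ → ℕ → M) (n : ℕ) :
    dSeq s u i (n + 1) = u.flowWith (indFlow s i u.X (eSeq s u i n)) := rfl

lemma indFlow_mono (h : FlowGraph M) (i : ℕ → ℕ → M) (T : Finset ℕ)
    {c c' : ℕ → M} (hc : ∀ y, y ∈ h.X → c y ≤ c' y) :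
    ∀ y x, indFlow h i T c y x ≤ indFlow h i T c' y x := by
  intro y x
  unfold indFlow
  split
  · apply add_le_add_left
    split
    · next hy => exact fmcont_mono (h.econt y x hy) (hc y hy)
    · exact le_rfl
  · exact le_rfl

section Seqs

variable (s u : FlowGraph M) (i : ℕ → ℕ → M)
variable (hd : Disjoint s.X u.X)
variable (hiz : ∀ y, (y ∈ s.X ∨ y ∈ u.X) → ∀ x, i y x = 0)
variable (hifin : ∀ x, (Function.support fun y => i y x).Finite)

include hd hiz hifin in
lemma dSeq_le_F : ∀ n z, dSeq s u i n z ≤ (gmul s u).flowWith i z := by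
  intro n
  induction n with
  | zero => intro z; exact zero_le
  | succ n ih =>
      have he : ∀ z, eSeq s u i n z ≤ (gmul s u).flowWith i z := by
        intro z
        by_cases hz : z ∈ s.X
        · rw [eSeq, flow_gmul_left s u hd i hiz hifin hz]
          exact flowWith_mono_inflow s
            (fun x => indFlow_fin u i s.X _ x (hifin x))
            (indFlow_mono u i s.X (fun y _ => ih y)) z
        · rw [eSeq, flowWith_outside s _ hz]; exact zero_le
      intro z
      by_cases hz : z ∈ u.X
      · rw [dSeq_succ_eq, flow_gmul_right s u hd i hiz hifin hz]
        exact flowWith_mono_inflow u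
          (fun x => indFlow_fin s i u.X _ x (hifin x))
          (indFlow_mono s i u.X (fun y _ => he y)) z
      · rw [dSeq_succ_eq, flowWith_outside u _ hz]; exact zero_le

include hd hiz hifin in
lemma eSeq_le_F : ∀ n z, eSeq s u i n z ≤ (gmul s u).flowWith i z := by
  intro n z
  by_cases hz : z ∈ s.X
  · rw [eSeq, flow_gmul_left s u hd i hiz hifin hz]
    exact flowWith_mono_inflow s (fun x => indFlow_fin u i s.X _ x (hifin x))
      (indFlow_mono u i s.X (fun y _ => dSeq_le_F s u i hd hiz hifin n y)) z
  · rw [eSeq, flowWith_outside s _ hz]; exact zero_le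

include hifin in
lemma dSeq_le_succ : ∀ n z, dSeq s u i n z ≤ dSeq s u i (n + 1) z := by
  intro n
  induction n with
  | zero => intro z; exact zero_le
  | succ n ih =>
      have he : ∀ z, eSeq s u i n z ≤ eSeq s u i (n + 1) z := fun z =>
        flowWith_mono_inflow s (fun x => indFlow_fin u i s.X _ x (hifin x))
          (indFlow_mono u i s.X (fun y _ => ih y)) z
      intro z
      rw [dSeq_succ_eq, dSeq_succ_eq]
      exact flowWith_mono_inflow u (fun x => indFlow_fin s i u.X _ x (hifin x))
        (indFlow_mono s i u.X (fun y _ => he y)) z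

include hifin in
lemma eSeq_le_succ : ∀ n z, eSeq s u i n z ≤ eSeq s u i (n + 1) z := by
  intro n z
  exact flowWith_mono_inflow s (fun x => indFlow_fin u i s.X _ x (hifin x))
    (indFlow_mono u i s.X (fun y _ => dSeq_le_succ s u i hifin n y)) z

include hifin in
lemma dSeq_monotone (z : ℕ) : Monotone fun n => dSeq s u i n z :=
  monotone_nat_of_le_succ fun n => dSeq_le_succ s u i hifin n z

include hifin in
lemma eSeq_monotone (z : ℕ) : Monotone fun n => eSeq s u i n z :=
  monotone_nat_of_le_succ fun n => eSeq_le_succ s u i hifin n z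

include hifin in
/-- The step of `e n` as a fixpoint, written in composite form. -/
lemma eSeq_fix (n : ℕ) {z : ℕ} (hz : z ∈ s.X) :
    (∑ᶠ y, i y z) + ((∑ y ∈ s.X, s.E y z (eSeq s u i n y)) +
      ∑ y ∈ u.X, u.E y z (dSeq s u i n y)) = eSeq s u i n z := by
  conv_rhs => rw [eSeq, ← stepWith_flowWith s (indFlow u i s.X (dSeq s u i n)) z]
  show _ = if z ∈ s.X then _ + ∑ y ∈ s.X, s.E y z (s.flowWith (indFlow u i s.X (dSeq s u i n)) y) else 0
  rw [if_pos hz, finsum_indFlow u i s.X (dSeq s u i n) z (hifin z), if_pos hz]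
  rw [show s.flowWith (indFlow u i s.X (dSeq s u i n)) = eSeq s u i n from rfl]
  abel

include hifin in
lemma dSeq_fix (n : ℕ) {z : ℕ} (hz : z ∈ u.X) :
    (∑ᶠ y, i y z) + ((∑ y ∈ s.X, s.E y z (eSeq s u i n y)) +
      ∑ y ∈ u.X, u.E y z (dSeq s u i (n + 1) y)) = dSeq s u i (n + 1) z := by
  conv_rhs => rw [dSeq_succ_eq, ← stepWith_flowWith u (indFlow s i u.X (eSeq s u i n)) z]
  show _ = if z ∈ u.X then _ + ∑ y ∈ u.X, u.E y z (u.flowWith (indFlow s i u.X (eSeq s u i n)) y) else 0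
  rw [if_pos hz, finsum_indFlow s i u.X (eSeq s u i n) z (hifin z), if_pos hz]
  rw [show u.flowWith (indFlow s i u.X (eSeq s u i n)) = dSeq s u i (n + 1) from rfl]
  abel

include hd hiz hifin in
lemma seq_limit :
    (∀ x ∈ s.X, (gmul s u).flowWith i x = FlowMonoid.csup (fun n => eSeq s u i n x)) ∧
    (∀ x ∈ u.X, (gmul s u).flowWith i x = FlowMonoid.csup (fun n => dSeq s u i n x)) := by
  set F := (gmul s u).flowWith i with hF
  set b : ℕ → M := fun z => if z ∈ s.X then FlowMonoid.csup (fun n => eSeq s u i n z)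
    else if z ∈ u.X then FlowMonoid.csup (fun n => dSeq s u i n z) else 0 with hb
  have hbF : ∀ z, b z ≤ F z := by
    intro z
    rw [hb]
    by_cases hz : z ∈ s.X
    · simp only [if_pos hz]
      exact csup_le' (eSeq_monotone s u i hifin z)
        (fun n => eSeq_le_F s u i hd hiz hifin n z)
    · simp only [if_neg hz]
      by_cases hz2 : z ∈ u.X
      · simp only [if_pos hz2]
        exact csup_le' (dSeq_monotone s u i hifin z)
          (fun n => dSeq_le_F s u i hd hiz hifin n z)
      · simp only [if_neg hz2]; exact zero_le
  have hpre : ∀ z, (gmul s u).stepWith i b z ≤ b z := by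
    intro z
    by_cases hzU : z ∈ s.X ∪ u.X
    · rw [gmul_step s u hd i b hzU]
      -- rewrite the two sums as csups
      have hsumS : ∑ y ∈ s.X, s.E y z (b y) =
          FlowMonoid.csup (fun n => ∑ y ∈ s.X, s.E y z (eSeq s u i n y)) := by
        rw [← csup_sum (K := fun y n => s.E y z (eSeq s u i n y))
          (fun y hy p q hpq => fmcont_mono (s.econt y z hy)
            (eSeq_monotone s u i hifin y hpq))]
        refine Finset.sum_congr rfl fun y hy => ?_
        rw [hb]
        simp only [if_pos hy]
        exact cont_csup (s.econt y z hy) (eSeq_monotone s u i hifin y)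
      have hsumU : ∑ y ∈ u.X, u.E y z (b y) =
          FlowMonoid.csup (fun n => ∑ y ∈ u.X, u.E y z (dSeq s u i n y)) := by
        rw [← csup_sum (K := fun y n => u.E y z (dSeq s u i n y))
          (fun y hy p q hpq => fmcont_mono (u.econt y z hy)
            (dSeq_monotone s u i hifin y hpq))]
        refine Finset.sum_congr rfl fun y hy => ?_
        rw [hb]
        simp only [if_neg (Finset.disjoint_right.mp hd hy), if_pos hy]
        exact cont_csup (u.econt y z hy) (dSeq_monotone s u i hifin y)
      rw [hsumS, hsumU,
        csup_add'
          (fun p q hpq => Finset.sum_le_sum fun y hy =>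
            fmcont_mono (s.econt y z hy) (eSeq_monotone s u i hifin y hpq))
          (fun p q hpq => Finset.sum_le_sum fun y hy =>
            fmcont_mono (u.econt y z hy) (dSeq_monotone s u i hifin y hpq)),
        FlowMonoid.add_csup _ _
          (fun p q hpq => add_le_add
            (Finset.sum_le_sum fun y hy =>
              fmcont_mono (s.econt y z hy) (eSeq_monotone s u i hifin y hpq))
            (Finset.sum_le_sum fun y hy =>
              fmcont_mono (u.econt y z hy) (dSeq_monotone s u i hifin y hpq)))]
      apply csup_le' (fun p q hpq => add_le_add_right (add_le_add
        (Finset.sum_le_sum fun y hy =>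
          fmcont_mono (s.econt y z hy) (eSeq_monotone s u i hifin y hpq))
        (Finset.sum_le_sum fun y hy =>
          fmcont_mono (u.econt y z hy) (dSeq_monotone s u i hifin y hpq))) _)
      intro n
      rcases Finset.mem_union.mp hzU with hz | hz
      · -- inner term equals `eSeq n z`
        rw [eSeq_fix s u i hifin n hz, hb]
        simp only [if_pos hz]
        exact le_csup' (eSeq_monotone s u i hifin z) n
      · -- inner term is at most `dSeq (n+1) z`
        have hzs : z ∉ s.X := Finset.disjoint_right.mp hd hz
        have hle1 : (∑ᶠ y, i y z) + ((∑ y ∈ s.X, s.E y z (eSeq s u i n y)) +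
            ∑ y ∈ u.X, u.E y z (dSeq s u i n y)) ≤ dSeq s u i (n + 1) z := by
          rw [← dSeq_fix s u i hifin n hz]
          apply add_le_add_right
          apply add_le_add_right
          exact Finset.sum_le_sum fun y hy => fmcont_mono (u.econt y z hy)
            (dSeq_le_succ s u i hifin n y)
        refine hle1.trans ?_
        rw [hb]
        simp only [if_neg hzs, if_pos hz]
        exact le_csup' (dSeq_monotone s u i hifin z) (n + 1)
    · have hzU' : z ∉ (gmul s u).X := hzU
      show (if z ∈ (gmul s u).X then _ else (0 : M)) ≤ b z
      rw [if_neg hzU']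
      exact zero_le
  have hFb : ∀ z, F z ≤ b z := fun z => flowWith_le_prefix (gmul s u) i hpre z
  constructor
  · intro x hx
    have h1 := hFb x
    have h2 := hbF x
    rw [hb] at h1 h2
    simp only [if_pos hx] at h1 h2
    exact le_antisymm h1 h2
  · intro x hx
    have hxs : x ∉ s.X := Finset.disjoint_right.mp hd hx
    have h1 := hFb x
    have h2 := hbF x
    rw [hb] at h1 h2
    simp only [if_neg hxs, if_pos hx] at h1 h2
    exact le_antisymm h1 h2

include hd hiz hifin in
/-- The composite transfer function as a join over the alternating stages. -/
lemma tf_gmul_csup (y : ℕ) :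
    (gmul s u).tf i y = FlowMonoid.csup (fun n =>
      (∑ x ∈ s.X, s.E x y (eSeq s u i n x)) +
        ∑ x ∈ u.X, u.E x y (dSeq s u i n x)) := by
  show ∑ x ∈ s.X ∪ u.X, (gmul s u).E x y ((gmul s u).flowWith i x) = _
  rw [Finset.sum_union hd]
  have h1 : ∑ x ∈ s.X, (gmul s u).E x y ((gmul s u).flowWith i x) =
      ∑ x ∈ s.X, FlowMonoid.csup (fun n => s.E x y (eSeq s u i n x)) := by
    refine Finset.sum_congr rfl fun x hx => ?_
    rw [gmul_E_mem_left s u hx, (seq_limit s u i hd hiz hifin).1 x hx]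
    exact cont_csup (s.econt x y hx) (eSeq_monotone s u i hifin x)
  have h2 : ∑ x ∈ u.X, (gmul s u).E x y ((gmul s u).flowWith i x) =
      ∑ x ∈ u.X, FlowMonoid.csup (fun n => u.E x y (dSeq s u i n x)) := by
    refine Finset.sum_congr rfl fun x hx => ?_
    rw [gmul_E_mem_right s u hd hx, (seq_limit s u i hd hiz hifin).2 x hx]
    exact cont_csup (u.econt x y hx) (dSeq_monotone s u i hifin x)
  rw [h1, h2,
    csup_sum (K := fun x n => s.E x y (eSeq s u i n x)) (fun x hx p q hpq =>
      fmcont_mono (s.econt x y hx) (eSeq_monotone s u i hifin x hpq)),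
    csup_sum (K := fun x n => u.E x y (dSeq s u i n x)) (fun x hx p q hpq =>
      fmcont_mono (u.econt x y hx) (dSeq_monotone s u i hifin x hpq)),
    csup_add'
      (fun p q hpq => Finset.sum_le_sum fun x hx =>
        fmcont_mono (s.econt x y hx) (eSeq_monotone s u i hifin x hpq))
      (fun p q hpq => Finset.sum_le_sum fun x hx =>
        fmcont_mono (u.econt x y hx) (dSeq_monotone s u i hifin x hpq))]

end Seqs
end Chunk4

section Chunk5
open FlowMonoid FlowGraph Function

/-- KEY LEMMA: the induced estimator on flow graphs is a congruence with
respect to composition with `u`. -/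
lemma ctxLe_gmul {r : M → M → Prop} (hr : IsEstimator r) (s s' u : FlowGraph M)
    (hctx : ctxLe r s s') (hmd : MDef s u) : ctxLe r (gmul s u) (gmul s' u) := by
  obtain ⟨hX, hin, htf⟩ := hctx
  have hd : Disjoint s.X u.X := hmd.1
  have hd' : Disjoint s'.X u.X := hX ▸ hd
  refine ⟨?_, ?_, ?_⟩
  · show s.X ∪ u.X = s'.X ∪ u.X
    rw [hX]
  · funext y x
    show (if y ∈ s.X ∪ u.X then 0 else s.inflow y x + u.inflow y x) =
      (if y ∈ s'.X ∪ u.X then 0 else s'.inflow y x + u.inflow y x)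
    rw [hX, hin]
  · intro i hib y hy
    have hiz : ∀ z, (z ∈ s.X ∨ z ∈ u.X) → ∀ x, i z x = 0 := by
      intro z hz x
      have h1 := hib z x
      have h2 : (gmul s u).inflow z x = 0 := by
        show (if z ∈ s.X ∪ u.X then 0 else s.inflow z x + u.inflow z x) = 0
        rw [if_pos (Finset.mem_union.mpr hz)]
      rw [h2] at h1
      exact le_antisymm h1 (zero_le)
    have hifin : ∀ x, (Function.support fun z => i z x).Finite := by
      intro x
      apply Set.Finite.subset ((gmul s u).inflow_fin x)
      intro z hz
      simp only [Function.mem_support] at *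
      intro h0
      exact hz (le_antisymm (h0 ▸ hib z x) (zero_le))
    have hiz' : ∀ z, (z ∈ s'.X ∨ z ∈ u.X) → ∀ x, i z x = 0 := by
      intro z hz x
      refine hiz z (hz.imp (fun h => ?_) id) x
      rw [hX]; exact h
    have hindeq : indFlow u i s'.X = indFlow u i s.X := by rw [hX]
    -- the composite flow (with inflow `i`) is below the full composite flow
    have hFle : ∀ z, (gmul s u).flowWith i z ≤ (gmul s u).flow z := fun z =>
      flowWith_mono_inflow (gmul s u) (gmul s u).inflow_fin hib z
    -- key: contributions of `u` into `s` are bounded by `s.inflow`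
    have hkey : ∀ z ∈ u.X, ∀ x ∈ s.X,
        u.E z x ((gmul s u).flowWith i z) ≤ s.inflow z x := by
      intro z hz x hx
      have h1 : (gmul s u).flow z = u.flow z := hmd.2.2.2 z hz
      have h2 : u.out z x = s.inflow z x := (hmd.2.1 x hx z hz).2
      calc u.E z x ((gmul s u).flowWith i z)
          ≤ u.E z x ((gmul s u).flow z) := fmcont_mono (u.econt z x hz) (hFle z)
        _ = u.E z x (u.flow z) := by rw [h1]
        _ = s.inflow z x := h2
    -- the stage inflows to `s` are admissible for the estimator hypothesis
    have hjle : ∀ n z x, indFlow u i s.X (dSeq s u i n) z x ≤ s.inflow z x := by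
      intro n z x
      unfold indFlow
      split
      · next hx =>
          split
          · next hz =>
              rw [hiz z (Or.inr hz) x, add_zero]
              exact le_trans (fmcont_mono (u.econt z x hz)
                (dSeq_le_F s u i hd hiz hifin n z)) (hkey z hz x hx)
          · next hz =>
              rw [zero_add]
              by_cases hzs : z ∈ s.X
              · rw [hiz z (Or.inl hzs) x]; exact zero_le
              · have h1 := hib z x
                have h2 : (gmul s u).inflow z x = s.inflow z x + u.inflow z x := by
                  show (if z ∈ s.X ∪ u.X then 0 else s.inflow z x + u.inflow z x) = _
                  rw [if_neg (by
                    intro hmem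
                    rcases Finset.mem_union.mp hmem with h | h
                    · exact hzs h
                    · exact hz h)]
                have h3 : u.inflow z x = 0 := by
                  by_contra h4
                  exact Finset.disjoint_left.mp hd hx ((u.inflow_dom z x h4).2)
                rw [h2, h3, add_zero] at h1
                exact h1
      · exact zero_le
    -- derivation of the stage tf-relation from the stage flow relation
    have hstep_tf : ∀ n, (∀ x, r (dSeq s u i n x) (dSeq s' u i n x)) →
        ∀ z, z ∉ s.X → r (s.tf (indFlow u i s.X (dSeq s u i n)) z)
          (s'.tf (indFlow u i s'.X (dSeq s' u i n)) z) := by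
      intro n hdn z hz
      rw [hindeq]
      have h1 : r (s.tf (indFlow u i s.X (dSeq s u i n)) z)
          (s'.tf (indFlow u i s.X (dSeq s u i n)) z) := htf _ (hjle n) z hz
      have h2 : r (s'.tf (indFlow u i s.X (dSeq s u i n)) z)
          (s'.tf (indFlow u i s.X (dSeq s' u i n)) z) := by
        have hflows : ∀ x, r (s'.flowWith (indFlow u i s.X (dSeq s u i n)) x)
            (s'.flowWith (indFlow u i s.X (dSeq s' u i n)) x) := by
          refine flow_rel (hr.1 0) hr.2.2.2.1 s' s' _ _ ?_
          intro c c' hcc x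
          show r (if x ∈ s'.X then (∑ᶠ w, indFlow u i s.X (dSeq s u i n) w x) +
              ∑ w ∈ s'.X, s'.E w x (c w) else 0)
            (if x ∈ s'.X then (∑ᶠ w, indFlow u i s.X (dSeq s' u i n) w x) +
              ∑ w ∈ s'.X, s'.E w x (c' w) else 0)
          by_cases hx : x ∈ s'.X
          · rw [if_pos hx, if_pos hx]
            apply hr.add_rel
            · rw [finsum_indFlow u i s.X _ x (hifin x),
                finsum_indFlow u i s.X _ x (hifin x)]
              by_cases hxs : x ∈ s.X
              · rw [if_pos hxs, if_pos hxs]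
                exact hr.add_rel (hr.sum_rel fun w hw =>
                  hr.2.2.2.2 _ (u.econt w x hw) _ _ (hdn w)) (hr.1 _)
              · rw [if_neg hxs, if_neg hxs]
                exact hr.1 0
            · exact hr.sum_rel fun w hw =>
                hr.2.2.2.2 _ (s'.econt w x hw) _ _ (hcc w)
          · rw [if_neg hx, if_neg hx]
            exact hr.1 0
        exact hr.sum_rel fun x hx =>
          hr.2.2.2.2 _ (s'.econt x z hx) _ _ (hflows x)
      exact hr.2.1 _ _ _ h1 h2
    -- main induction over the alternating stages
    have hseq : ∀ n, (∀ x, r (dSeq s u i n x) (dSeq s' u i n x)) := by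
      intro n
      induction n with
      | zero => intro x; exact hr.1 0
      | succ n ih =>
          intro x
          rw [dSeq_succ_eq s u i n, dSeq_succ_eq s' u i n]
          refine flow_rel (hr.1 0) hr.2.2.2.1 u u _ _ ?_ x
          intro c c' hcc x
          show r (if x ∈ u.X then (∑ᶠ w, indFlow s i u.X (eSeq s u i n) w x) +
              ∑ w ∈ u.X, u.E w x (c w) else 0)
            (if x ∈ u.X then (∑ᶠ w, indFlow s' i u.X (eSeq s' u i n) w x) +
              ∑ w ∈ u.X, u.E w x (c' w) else 0)
          by_cases hx : x ∈ u.X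
          · rw [if_pos hx, if_pos hx]
            apply hr.add_rel
            · rw [finsum_indFlow s i u.X _ x (hifin x),
                finsum_indFlow s' i u.X _ x (hifin x), if_pos hx, if_pos hx]
              refine hr.add_rel ?_ (hr.1 _)
              exact hstep_tf n ih x (Finset.disjoint_right.mp hd hx)
            · exact hr.sum_rel fun w hw =>
                hr.2.2.2.2 _ (u.econt w x hw) _ _ (hcc w)
          · rw [if_neg hx, if_neg hx]
            exact hr.1 0
    -- pass to the limit
    have hys : y ∉ s.X := fun h => hy (Finset.mem_union_left _ h)
    rw [show (gmul s u).tf i y = _ from tf_gmul_csup s u i hd hiz hifin y,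
      show (gmul s' u).tf i y = _ from tf_gmul_csup s' u i hd' hiz' hifin y]
    apply hr.2.2.2.1
    · intro p q hpq
      exact add_le_add
        (Finset.sum_le_sum fun x hx =>
          fmcont_mono (s.econt x y hx) (eSeq_monotone s u i hifin x hpq))
        (Finset.sum_le_sum fun x hx =>
          fmcont_mono (u.econt x y hx) (dSeq_monotone s u i hifin x hpq))
    · intro p q hpq
      exact add_le_add
        (Finset.sum_le_sum fun x hx =>
          fmcont_mono (s'.econt x y hx) (eSeq_monotone s' u i hifin x hpq))
        (Finset.sum_le_sum fun x hx =>
          fmcont_mono (u.econt x y hx) (dSeq_monotone s' u i hifin x hpq))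
    · intro n
      apply hr.add_rel
      · exact hstep_tf n (hseq n) y hys
      · exact hr.sum_rel fun x hx =>
          hr.2.2.2.2 _ (u.econt x y hx) _ _ (hseq n x)

/-- The empty flow graph. -/
noncomputable def emptyFG : FlowGraph M where
  X := ∅
  E := fun _ _ _ => 0
  inflow := fun _ _ => 0
  econt := fun x _ hx => absurd hx (Finset.notMem_empty x)
  edom := fun _ _ _ => rfl
  inflow_fin := fun _ => Set.finite_empty.subset (fun _ hy => (hy rfl).elim)
  inflow_dom := fun _ _ h => absurd rfl h

end Chunk5

attribute [local instance] Classical.propDecidable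

/-- Predicates over flow graphs: sets of flow graphs plus a top element `⊤`. -/
abbrev FPred (M : Type u) [FlowMonoid M] := WithTop (Set (FlowGraph M))

/-- The ghost multiplication `⌢` lifted to predicates (`⊤` is absorbing). -/
def gstarFP (a b : FPred M) : FPred M :=
  WithTop.recTopCoe ⊤
    (fun a' => WithTop.recTopCoe ⊤
      (fun b' => (({w | ∃ s ∈ a', ∃ t ∈ b', Disjoint s.X t.X ∧ w = FlowGraph.gmul s t} :
        Set (FlowGraph M)) : FPred M)) b) a

/-- A map from flow graphs to predicates, lifted to predicates by joins. -/
noncomputable def liftUp (up : FlowGraph M → FPred M) (a : FPred M) : FPred M :=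
  WithTop.recTopCoe ⊤ (fun a' => ⨆ s ∈ a', up s) a

/-- The approximate physical update: the physical update strengthened by the
estimator; it aborts if the estimator cannot be established. -/
noncomputable def absUp (r : M → M → Prop) (up : FlowGraph M → FPred M)
    (s : FlowGraph M) : FPred M :=
  if up s ≠ ⊤ ∧ ∀ A : Set (FlowGraph M), up s = ↑A → ∀ t ∈ A, ctxLe r s t then up s
  else ⊤

open FlowGraph in
/-- The strengthened physical update is an approximate physical
update: (i) it over-approximates the physical update on every predicate, and
(ii) if `up♯(com)(s) ≠ ⊤` and `s ⋆ u` is defined then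
`up♯(com)(s ⋆ u) = up♯(com)(s) ⌢ u`. -/
theorem approximate_physical_update (r : M → M → Prop) (hr : IsEstimator r)
    (up : FlowGraph M → FPred M)
    -- physical updates change neither the nodes nor the inflow
    (hdom : ∀ (s : FlowGraph M) (A : Set (FlowGraph M)), up s = ↑A →
      ∀ t ∈ A, t.X = s.X ∧ t.inflow = s.inflow)
    -- `up(com)(s ⋆ u) = up(com)(s) ⌢ u` whenever `up(com)(s) ≠ ⊤`
    (hdec : ∀ s u : FlowGraph M, MDef s u → up s ≠ ⊤ →
      up (gmul s u) = gstarFP (up s) (({u} : Set (FlowGraph M)) : FPred M)) :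
    (∀ a : FPred M, liftUp up a ≤ liftUp (absUp r up) a) ∧
    (∀ s u : FlowGraph M, absUp r up s ≠ ⊤ → MDef s u →
      absUp r up (gmul s u) =
        gstarFP (absUp r up s) (({u} : Set (FlowGraph M)) : FPred M)) := by
  have hne : Nonempty (FlowGraph M) := ⟨emptyFG⟩
  constructor
  · -- (i) over-approximation
    intro a
    induction a using WithTop.recTopCoe with
    | top => exact le_rfl
    | coe A =>
        simp only [liftUp, WithTop.recTopCoe_coe]
        haveI : Nonempty (FlowGraph M) := hne
        refine ciSup_mono (OrderTop.bddAbove _) fun s => ?_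
        by_cases hs : s ∈ A
        · haveI : Nonempty (s ∈ A) := ⟨hs⟩
          refine ciSup_mono (OrderTop.bddAbove _) fun _ => ?_
          unfold absUp
          split
          · exact le_rfl
          · exact le_top
        · haveI : IsEmpty (s ∈ A) := ⟨hs⟩
          have he : (⨆ _ : s ∈ A, up s : FPred M) = ⨆ _ : s ∈ A, absUp r up s := by
            simp only [iSup, Set.range_eq_empty]
          rw [he]
  · -- (ii) decomposition
    intro s u habs hmd
    have hC : up s ≠ ⊤ ∧ ∀ A : Set (FlowGraph M), up s = ↑A → ∀ t ∈ A, ctxLe r s t := by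
      by_contra hC
      unfold absUp at habs
      rw [if_neg hC] at habs
      exact habs rfl
    have habs_eq : absUp r up s = up s := by unfold absUp; rw [if_pos hC]
    obtain ⟨A, hA⟩ := WithTop.ne_top_iff_exists.mp hC.1
    have hstar : gstarFP (up s) (({u} : Set (FlowGraph M)) : FPred M) =
        ((({w | ∃ s₁ ∈ A, ∃ t₁ ∈ ({u} : Set (FlowGraph M)),
          Disjoint s₁.X t₁.X ∧ w = gmul s₁ t₁} : Set (FlowGraph M))) : FPred M) := by
      rw [← hA]
      rfl
    have hup : up (gmul s u) =
        ((({w | ∃ s₁ ∈ A, ∃ t₁ ∈ ({u} : Set (FlowGraph M)),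
          Disjoint s₁.X t₁.X ∧ w = gmul s₁ t₁} : Set (FlowGraph M))) : FPred M) :=
      (hdec s u hmd hC.1).trans hstar
    have hC2 : up (gmul s u) ≠ ⊤ ∧ ∀ A' : Set (FlowGraph M), up (gmul s u) = ↑A' →
        ∀ t ∈ A', ctxLe r (gmul s u) t := by
      constructor
      · rw [hup]; exact WithTop.coe_ne_top
      · intro A' h' t ht
        rw [hup] at h'
        have hBA := WithTop.coe_injective h'
        rw [← hBA] at ht
        obtain ⟨s₁, hs₁, t₁, ht₁, hdisj, rfl⟩ := ht
        have ht₁' : t₁ = u := ht₁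
        subst ht₁'
        exact ctxLe_gmul hr s s₁ t₁ (hC.2 A hA.symm s₁ hs₁) hmd
    calc absUp r up (gmul s u) = up (gmul s u) := by unfold absUp; rw [if_pos hC2]
      _ = gstarFP (up s) (({u} : Set (FlowGraph M)) : FPred M) := hdec s u hmd hC.1
      _ = gstarFP (absUp r up s) (({u} : Set (FlowGraph M)) : FPred M) := by
          rw [habs_eq]
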